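/- Let S be a faithfully flat weak content R-algebra such that the inclusion R ⊆ S satisfies INC. Then S is a semicontent R-algebra. -/
import Mathlib


section OhmRushDefs

variable {R S : Type*} [CommRing R] [CommRing S]

/-- The Ohm–Rush content of an element `s` of an `R`-algebra `S` (given by a ring
homomorphism `f : R →+* S`): the intersection of all ideals `I` of `R` with `s ∈ IS`. -/
def ORContent (f : R →+* S) (s : S) : Ideal R :=
  sInf {I : Ideal R | s ∈ Ideal.map f I}

/-- `S` is an Ohm–Rush `R`-algebra if every `s ∈ S` lies in the extension of its content. -/
def IsOhmRushAlgebra (f : R →+* S) : Prop :=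
  ∀ s : S, s ∈ Ideal.map f (ORContent f s)

/-- Flatness of a ring homomorphism. -/
def RingHomFlat (f : R →+* S) : Prop :=
  letI := f.toAlgebra; Module.Flat R S

/-- Faithful flatness of a ring homomorphism. -/
def RingHomFaithfullyFlat (f : R →+* S) : Prop :=
  letI := f.toAlgebra; Module.FaithfullyFlat R S

/-- Module-freeness of a ring homomorphism. -/
def RingHomFree (f : R →+* S) : Prop :=
  letI := f.toAlgebra; Module.Free R S

/-- Weak content algebra: Ohm–Rush and `√c(fg) = √(c(f)c(g))`. -/
def IsWeakContentAlgebra (f : R →+* S) : Prop :=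
  IsOhmRushAlgebra f ∧ ∀ s t : S,
    (ORContent f (s * t)).radical = (ORContent f s * ORContent f t).radical

/-- Semicontent algebra: faithfully flat Ohm–Rush, and for every multiplicative subset `W`
of `R`, if `c(s)R_W = R_W` then `c(st)R_W = c(t)R_W`. -/
def IsSemicontentAlgebra (f : R →+* S) : Prop :=
  IsOhmRushAlgebra f ∧ RingHomFaithfullyFlat f ∧
    ∀ (W : Submonoid R) (s t : S),
      Ideal.map (algebraMap R (Localization W)) (ORContent f s) = ⊤ →
      Ideal.map (algebraMap R (Localization W)) (ORContent f (s * t)) =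
        Ideal.map (algebraMap R (Localization W)) (ORContent f t)

/-- Content algebra: faithfully flat Ohm–Rush satisfying the Dedekind–Mertens type formula. -/
def IsContentAlgebra (f : R →+* S) : Prop :=
  IsOhmRushAlgebra f ∧ RingHomFaithfullyFlat f ∧
    ∀ s t : S, ∃ n : ℕ, 0 < n ∧
      ORContent f s ^ n * ORContent f t = ORContent f s ^ (n - 1) * ORContent f (s * t)

/-- A ring homomorphism satisfies INC if comparable primes of `S` with the same
contraction to `R` are equal. -/
def SatisfiesINC (f : R →+* S) : Prop :=
  ∀ Q Q' : Ideal S, Q.IsPrime → Q'.IsPrime → Q ≤ Q' →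
    Ideal.comap f Q = Ideal.comap f Q' → Q = Q'

/-- A valuation domain: a domain whose divisibility is total. -/
def IsValuationDomain (A : Type*) [CommRing A] : Prop :=
  IsDomain A ∧ ∀ a b : A, ∃ c : A, a * c = b ∨ b * c = a

/-- A Prüfer domain: a domain whose localization at every maximal ideal is a
valuation domain. -/
def IsPruferDomain (A : Type*) [CommRing A] : Prop :=
  IsDomain A ∧ ∀ (P : Ideal A) (hP : P.IsMaximal),
    haveI := hP.isPrime
    IsValuationDomain (Localization.AtPrime P)

end OhmRushDefs


section AuxFlat
open TensorProduct

variable {R S : Type*} [CommRing R] [CommRing S] [Algebra R S]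

/-- Flat colon lemma: if `f w * t ∈ IS` then `t ∈ (I : w)S`. -/
lemma flat_colon [Module.Flat R S] (I : Ideal R) (w : R) (t : S)
    (h : algebraMap R S w * t ∈ I.map (algebraMap R S)) :
    t ∈ (I.colon (Ideal.span {w})).map (algebraMap R S) := by
  set J := I.colon (Ideal.span {w}) with hJ
  have hle : (J : Submodule R R) ≤ Submodule.comap (LinearMap.lsmul R R w) I := by
    intro x hx
    simpa [smul_eq_mul, mul_comm] using Ideal.mem_colon_span_singleton.mp hx
  set φ : (R ⧸ (J : Submodule R R)) →ₗ[R] (R ⧸ (I : Submodule R R)) :=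
    Submodule.mapQ _ _ (LinearMap.lsmul R R w) hle with hφ
  have hφinj : Function.Injective φ := by
    rw [← LinearMap.ker_eq_bot, Submodule.eq_bot_iff]
    intro x hx
    obtain ⟨y, rfl⟩ := Submodule.Quotient.mk_surjective _ x
    rw [LinearMap.mem_ker, hφ, Submodule.mapQ_apply] at hx
    rw [Submodule.Quotient.mk_eq_zero] at hx ⊢
    exact Ideal.mem_colon_span_singleton.mpr (by simpa [smul_eq_mul, mul_comm] using hx)
  have hinj2 : Function.Injective (φ.lTensor S) :=
    Module.Flat.lTensor_preserves_injective_linearMap φ hφinj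
  -- the element t ⊗ 1 in S ⊗ R⧸J
  have key : φ.lTensor S (t ⊗ₜ[R] Submodule.Quotient.mk 1) = 0 := by
    have h1 : φ.lTensor S (t ⊗ₜ[R] Submodule.Quotient.mk 1)
        = t ⊗ₜ[R] Submodule.Quotient.mk w := by
      rw [LinearMap.lTensor_tmul, hφ, Submodule.mapQ_apply]
      simp [smul_eq_mul]
    rw [h1]
    apply (tensorQuotEquivQuotSMul S I).injective
    rw [map_zero]
    have : (tensorQuotEquivQuotSMul S I) (t ⊗ₜ[R] Submodule.Quotient.mk w)
        = Submodule.Quotient.mk (w • t) := tensorQuotEquivQuotSMul_tmul_mk I t w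
    rw [this, Submodule.Quotient.mk_eq_zero]
    rw [Ideal.smul_top_eq_map]
    simpa [Algebra.smul_def] using h
  have ht0 : (t ⊗ₜ[R] (Submodule.Quotient.mk 1) : S ⊗[R] (R ⧸ (J : Submodule R R))) = 0 := by
    apply hinj2; simpa using key
  have hcongr := congrArg (tensorQuotEquivQuotSMul S J) ht0
  have h2 : (tensorQuotEquivQuotSMul S J)
      (t ⊗ₜ[R] (Submodule.Quotient.mk 1 : R ⧸ (J : Submodule R R)))
      = Submodule.Quotient.mk ((1 : R) • t) := tensorQuotEquivQuotSMul_tmul_mk J t 1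
  rw [h2, map_zero, Submodule.Quotient.mk_eq_zero, Ideal.smul_top_eq_map] at hcongr
  simpa using hcongr

/-- Faithfully flat: `f x ∈ IS → x ∈ I`. -/
lemma ff_mem_of_map_mem [Module.FaithfullyFlat R S] (I : Ideal R) (x : R)
    (h : algebraMap R S x ∈ I.map (algebraMap R S)) : x ∈ I := by
  have h' : algebraMap R S x * 1 ∈ I.map (algebraMap R S) := by simpa using h
  have h1 : (1 : S) ∈ (I.colon (Ideal.span {x})).map (algebraMap R S) :=
    flat_colon I x 1 h'
  have htop : (I.colon (Ideal.span {x})).map (algebraMap R S) = ⊤ :=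
    Ideal.eq_top_of_isUnit_mem _ h1 isUnit_one
  have hcolon : I.colon (Ideal.span {x}) = ⊤ := by
    refine ((Module.FaithfullyFlat.iff_flat_and_ideal_smul_eq_top R S).mp
      inferInstance).2 _ ?_
    rw [Ideal.smul_top_eq_map, htop]; rfl
  have : (1 : R) ∈ I.colon (Ideal.span {x}) := hcolon ▸ Submodule.mem_top
  simpa using Ideal.mem_colon_span_singleton.mp this

end AuxFlat


/-- A faithfully flat weak content algebra `R ⊆ S` satisfying INC is a
semicontent algebra. -/
theorem semicontent_of_weakContent_of_inc {R S : Type*} [CommRing R] [CommRing S]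
    (f : R →+* S) (hinj : Function.Injective f)
    (hff : RingHomFaithfullyFlat f) (hwc : IsWeakContentAlgebra f)
    (hinc : SatisfiesINC f) :
    IsSemicontentAlgebra f := by
  obtain ⟨hOR, hrad⟩ := hwc
  refine ⟨hOR, hff, ?_⟩
  intro W s t hs_top
  letI : Algebra R S := f.toAlgebra
  haveI hffS : Module.FaithfullyFlat R S := hff
  have hfeq : algebraMap R S = f := rfl
  have hle_of_mem : ∀ (u : S) (I : Ideal R), u ∈ I.map f → ORContent f u ≤ I :=
    fun u I h => sInf_le h
  have hmul : ∀ u v : S, ORContent f (u * v) ≤ ORContent f u * ORContent f v := by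
    intro u v
    apply sInf_le
    show u * v ∈ (ORContent f u * ORContent f v).map f
    rw [Ideal.map_mul]
    exact Ideal.mul_mem_mul (hOR u) (hOR v)
  set A := algebraMap R (Localization W) with hA
  -- produce w₀ ∈ W ∩ c(s)
  have h1top : (1 : Localization W) ∈ (ORContent f s).map A := by
    rw [hA, hs_top]; exact Submodule.mem_top
  obtain ⟨⟨⟨a, ha⟩, w⟩, hw⟩ :=
    (IsLocalization.mem_map_algebraMap_iff W (Localization W)).mp h1top
  rw [one_mul] at hw
  obtain ⟨u, hu⟩ := (IsLocalization.eq_iff_exists W (Localization W)).mp hw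
  set w₀ : R := (u : R) * (w : R) with hw₀
  have hw₀W : w₀ ∈ W := Submonoid.mul_mem _ u.2 w.2
  have hw₀c : w₀ ∈ ORContent f s := by
    rw [hu]; exact Ideal.mul_mem_left _ _ ha
  -- localization of S at the image of W
  set W' : Submonoid S := W.map f with hW'
  set L := Localization W' with hLdef
  set aS := algebraMap S L with haS
  -- Step: aS s is a unit
  have hunit : IsUnit (aS s) := by
    by_contra hnu
    obtain ⟨Q, hQmax, hsQ⟩ := exists_max_ideal_of_mem_nonunits hnu
    haveI : Q.IsPrime := hQmax.isPrime
    set Q0 := Q.comap aS with hQ0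
    haveI hQ0p : Q0.IsPrime := Ideal.comap_isPrime aS Q
    set P := Q0.comap f with hPdef
    haveI hPp : P.IsPrime := Ideal.comap_isPrime f Q0
    have hw₀P : w₀ ∉ P := by
      intro hmem
      have hQm : aS (f w₀) ∈ Q := Ideal.mem_comap.mp (Ideal.mem_comap.mp hmem)
      have hu' : IsUnit (aS (f w₀)) :=
        IsLocalization.map_units (M := W') L ⟨f w₀, Submonoid.mem_map_of_mem f hw₀W⟩
      exact hQmax.ne_top (Q.eq_top_of_isUnit_mem hQm hu')
    have hPSne : P.map f ≠ ⊤ := by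
      intro htop
      have h1 : f 1 ∈ P.map f := by rw [htop]; exact Submodule.mem_top
      have : (1 : R) ∈ P := ff_mem_of_map_mem P 1 (by rw [hfeq]; exact h1)
      exact hPp.ne_top ((Ideal.eq_top_iff_one P).mpr this)
    have hPS_prime : (P.map f).IsPrime := by
      refine ⟨hPSne, fun {x y} hxy => ?_⟩
      have hcxy : ORContent f (x * y) ≤ P := hle_of_mem _ _ hxy
      have h1 : ORContent f x * ORContent f y ≤ P := by
        calc ORContent f x * ORContent f y
            ≤ (ORContent f x * ORContent f y).radical := Ideal.le_radical
          _ = (ORContent f (x * y)).radical := (hrad x y).symm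
          _ ≤ P.radical := Ideal.radical_mono hcxy
          _ = P := hPp.radical
      rcases hPp.mul_le.mp h1 with h | h
      · exact Or.inl (Ideal.map_mono h (hOR x))
      · exact Or.inr (Ideal.map_mono h (hOR y))
    have hcomap : (P.map f).comap f = P :=
      le_antisymm (fun x hx => ff_mem_of_map_mem P x (by rw [hfeq]; exact hx))
        Ideal.le_comap_map
    have hPSle : P.map f ≤ Q0 := Ideal.map_le_iff_le_comap.mpr le_rfl
    have hPSeq : P.map f = Q0 := hinc (P.map f) Q0 hPS_prime hQ0p hPSle (by rw [hcomap])
    have hsPS : s ∈ P.map f := by rw [hPSeq]; exact Ideal.mem_comap.mpr hsQ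
    exact hw₀P (hle_of_mem s P hsPS hw₀c)
  -- Step: t lands in c(st)·S_W'
  have hst_mem : aS (s * t) ∈ ((ORContent f (s * t)).map f).map aS :=
    Ideal.mem_map_of_mem aS (hOR (s * t))
  have ht_mem : aS t ∈ ((ORContent f (s * t)).map f).map aS := by
    have heq : aS t = ↑hunit.unit⁻¹ * aS (s * t) := by
      rw [map_mul, ← mul_assoc, IsUnit.val_inv_mul, one_mul]
    rw [heq]
    exact Ideal.mul_mem_left _ _ hst_mem
  obtain ⟨⟨⟨j, hj⟩, w'⟩, hjw⟩ :=
    (IsLocalization.mem_map_algebraMap_iff W' L).mp ht_mem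
  rw [haS, ← map_mul] at hjw
  obtain ⟨u', hu'⟩ := (IsLocalization.eq_iff_exists W' L).mp hjw
  have hw₁mem : ((w' : S) * (u' : S)) ∈ W' := Submonoid.mul_mem _ w'.2 u'.2
  obtain ⟨w₁, hw₁W, hfw₁⟩ := hw₁mem
  have hft : f w₁ * t ∈ (ORContent f (s * t)).map f := by
    have hx : t * ((w' : S) * (u' : S)) ∈ (ORContent f (s * t)).map f := by
      rw [show t * ((w' : S) * (u' : S)) = (u' : S) * (t * (w' : S)) by ring, hu']
      exact Ideal.mul_mem_left _ _ hj
    rw [hfw₁, show ((w' : S) * (u' : S)) * t = t * ((w' : S) * (u' : S)) from mul_comm _ _]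
    exact hx
  have ht_colon : t ∈ ((ORContent f (s * t)).colon (Ideal.span {w₁})).map f := by
    have hfc := flat_colon (ORContent f (s * t)) w₁ t (by rw [hfeq]; exact hft)
    rwa [hfeq] at hfc
  have hct : ORContent f t ≤ (ORContent f (s * t)).colon (Ideal.span {w₁}) :=
    hle_of_mem _ _ ht_colon
  -- conclude
  apply le_antisymm
  · calc (ORContent f (s * t)).map A
        ≤ (ORContent f s * ORContent f t).map A := Ideal.map_mono (hmul s t)
      _ = (ORContent f s).map A * (ORContent f t).map A := Ideal.map_mul A _ _
      _ = ⊤ * (ORContent f t).map A := by rw [hs_top]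
      _ = (ORContent f t).map A := Ideal.top_mul _
  · have hcolon_le : (((ORContent f (s * t)).colon (Ideal.span {w₁}))).map A
        ≤ (ORContent f (s * t)).map A := by
      rw [Ideal.map_le_iff_le_comap]
      intro x hx
      rw [Ideal.mem_comap]
      have hwx : w₁ * x ∈ ORContent f (s * t) := by
        rw [mul_comm w₁ x]
        exact Ideal.mem_colon_span_singleton.mp hx
      have hAunit : IsUnit (A w₁) := IsLocalization.map_units (Localization W) ⟨w₁, hw₁W⟩
      have hxeq : A x = ↑hAunit.unit⁻¹ * A (w₁ * x) := by
        rw [map_mul, ← mul_assoc, IsUnit.val_inv_mul, one_mul]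
      rw [hxeq]
      exact Ideal.mul_mem_left _ _ (Ideal.mem_map_of_mem A hwx)
    exact le_trans (Ideal.map_mono hct) hcolon_le
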